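/- Let $A$ be a free dg associative algebra and $A\langle y_0 \rangle$ the dg algebra obtained by freely adjoining one generator $y_0$ with $d(y_0) \in A$. Then the sets of Maurer-Cartan elements agree: $\mathrm{MC}(A\langle y_0\rangle) = \mathrm{MC}(A)$, i.e. every degree $1$ element $\xi \in A\langle y_0\rangle$ with $d\xi + \xi^2 = 0$ lies in $A$. -/

import Mathlib

noncomputable section

/-- The grading of a free associative algebra by the total degree of words,
where the generator `y` has degree `degY y`. -/
def freeGrading (k Y : Type) [Field k] (degY : Y → ℤ) (n : ℤ) :
    Submodule k (FreeAlgebra k Y) :=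
  Submodule.span k {b | ∃ w : List Y,
    (w.map (FreeAlgebra.ι k)).prod = b ∧ (w.map degY).sum = n}

namespace MCAux

variable (k : Type) [Field k] (X : Type)

/-- The "count `y₀`" homomorphism into polynomials. -/
def Phi : FreeAlgebra k (X ⊕ Unit) →ₐ[k] Polynomial (FreeAlgebra k (X ⊕ Unit)) :=
  FreeAlgebra.lift k (Sum.elim
    (fun x => Polynomial.C (FreeAlgebra.ι k (Sum.inl x)))
    (fun _ => Polynomial.C (FreeAlgebra.ι k (Sum.inr ())) * Polynomial.X))

/-- Evaluation at 1, an algebra homomorphism. -/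
def ev1 : Polynomial (FreeAlgebra k (X ⊕ Unit)) →ₐ[k] FreeAlgebra k (X ⊕ Unit) :=
  { toRingHom := Polynomial.eval₂RingHom' (RingHom.id _) 1 (fun a => Commute.one_right a)
    commutes' := fun c => by
      simp [Polynomial.algebraMap_apply, Polynomial.eval₂_C] }

@[simp] lemma ev1_C (u : FreeAlgebra k (X ⊕ Unit)) : ev1 k X (Polynomial.C u) = u := by
  simp [ev1, Polynomial.eval₂_C]

@[simp] lemma ev1_X : ev1 k X (Polynomial.X) = 1 := by
  simp [ev1, Polynomial.eval₂_X]

lemma ev1_Phi (b : FreeAlgebra k (X ⊕ Unit)) : ev1 k X (Phi k X b) = b := by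
  have : (ev1 k X).comp (Phi k X) = AlgHom.id k _ := by
    apply FreeAlgebra.hom_ext
    funext g
    rcases g with x | u
    · simp [Phi]
    · simp [Phi]
  simpa using congrArg (fun f => f b) (congrArg (fun (f : _ →ₐ[k] _) => (f : _ → _)) this)

/-- Retraction killing `y₀`. -/
def retr : FreeAlgebra k (X ⊕ Unit) →ₐ[k] FreeAlgebra k X :=
  FreeAlgebra.lift k (Sum.elim (FreeAlgebra.ι k) (fun _ => (0 : FreeAlgebra k X)))

/-- Inclusion. -/
def inclA : FreeAlgebra k X →ₐ[k] FreeAlgebra k (X ⊕ Unit) :=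
  FreeAlgebra.lift k (fun a : X => FreeAlgebra.ι k (Sum.inl a))

lemma retr_inclA (a : FreeAlgebra k X) : retr k X (inclA k X a) = a := by
  have : (retr k X).comp (inclA k X) = AlgHom.id k _ := by
    apply FreeAlgebra.hom_ext
    funext x
    simp [retr, inclA]
  simpa using congrArg (fun f => f a) (congrArg (fun (f : _ →ₐ[k] _) => (f : _ → _)) this)

lemma Phi_inclA (a : FreeAlgebra k X) :
    Phi k X (inclA k X a) = Polynomial.C (inclA k X a) := by
  have : (Phi k X).comp (inclA k X) = (Polynomial.CAlgHom).comp (inclA k X) := by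
    apply FreeAlgebra.hom_ext
    funext x
    simp [Phi, inclA, Polynomial.CAlgHom]
  simpa [Polynomial.CAlgHom] using
    congrArg (fun f => f a) (congrArg (fun (f : _ →ₐ[k] _) => (f : _ → _)) this)

/-- constant coefficient of `Phi` is `inclA ∘ retr`. -/
lemma coeff_zero_Phi (b : FreeAlgebra k (X ⊕ Unit)) :
    (Phi k X b).coeff 0 = inclA k X (retr k X b) := by
  induction b using FreeAlgebra.induction with
  | grade0 r => simp [Polynomial.algebraMap_apply]
  | grade1 g =>
      rcases g with x | u
      · simp [Phi, retr, inclA]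
      · simp [Phi, retr, Polynomial.coeff_C_mul]
  | mul a b ha hb => simp [map_mul, Polynomial.mul_coeff_zero, ha, hb]
  | add a b ha hb => simp [map_add, ha, hb]

/-- `Phi` on a word. -/
lemma Phi_word (w : List (X ⊕ Unit)) :
    Phi k X ((w.map (FreeAlgebra.ι k)).prod)
      = Polynomial.C ((w.map (FreeAlgebra.ι k)).prod)
          * Polynomial.X ^ (w.countP (fun g => g.isRight)) := by
  induction w with
  | nil => simp
  | cons g t ih =>
      rcases g with x | u
      · simp only [List.map_cons, List.prod_cons, map_mul, ih, List.countP_cons]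
        have h1 : Phi k X (FreeAlgebra.ι k (Sum.inl x))
            = Polynomial.C (FreeAlgebra.ι k (Sum.inl x)) := by simp [Phi]
        rw [h1, ← mul_assoc, ← Polynomial.C_mul]
        simp
      · obtain ⟨⟩ := u
        simp only [List.map_cons, List.prod_cons, map_mul, ih, List.countP_cons,
          Sum.isRight_inr]
        have h1 : Phi k X (FreeAlgebra.ι k (Sum.inr ()))
            = Polynomial.C (FreeAlgebra.ι k (Sum.inr ())) * Polynomial.X := by
          simp [Phi]
        rw [h1]
        have h2 : (if (true = true) then 1 else 0) = 1 := by simp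
        calc Polynomial.C (FreeAlgebra.ι k (Sum.inr ())) * Polynomial.X
                * (Polynomial.C ((t.map (FreeAlgebra.ι k)).prod)
                    * Polynomial.X ^ (t.countP (fun g => g.isRight)))
            = Polynomial.C (FreeAlgebra.ι k (Sum.inr ()))
                * (Polynomial.X * Polynomial.C ((t.map (FreeAlgebra.ι k)).prod))
                * Polynomial.X ^ (t.countP (fun g => g.isRight)) := by noncomm_ring
          _ = Polynomial.C (FreeAlgebra.ι k (Sum.inr ()))
                * (Polynomial.C ((t.map (FreeAlgebra.ι k)).prod) * Polynomial.X)
                * Polynomial.X ^ (t.countP (fun g => g.isRight)) := by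
                rw [(Polynomial.commute_X _).eq]
          _ = Polynomial.C (FreeAlgebra.ι k (Sum.inr ())
                  * (t.map (FreeAlgebra.ι k)).prod)
                * Polynomial.X ^ (t.countP (fun g => g.isRight) + 1) := by
                rw [Polynomial.C_mul, pow_succ']; noncomm_ring
          _ = _ := by simp


lemma one_mem_grading (Y : Type) (degY : Y → ℤ) :
    (1 : FreeAlgebra k Y) ∈ freeGrading k Y degY 0 :=
  Submodule.subset_span ⟨[], by simp, by simp⟩

lemma iota_mul_mem (Y : Type) (degY : Y → ℤ) (x : Y) (s : ℤ)
    (q : FreeAlgebra k Y) (hq : q ∈ freeGrading k Y degY s) :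
    FreeAlgebra.ι k x * q ∈ freeGrading k Y degY (degY x + s) := by
  have hq' : q ∈ Submodule.span k {b | ∃ w : List Y,
      (w.map (FreeAlgebra.ι k)).prod = b ∧ (w.map degY).sum = s} := hq
  clear hq
  induction hq' using Submodule.span_induction with
  | mem u hu =>
      obtain ⟨w, hw, hs⟩ := hu
      exact Submodule.subset_span ⟨x :: w, by simp [hw], by simp [hs]⟩
  | zero => rw [mul_zero]; exact zero_mem _
  | add a b _ _ ha hb => rw [mul_add]; exact add_mem ha hb
  | smul c a _ ha => rw [mul_smul_comm]; exact Submodule.smul_mem _ _ ha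

lemma retr_word (degX : X → ℤ) (degy : ℤ) (w : List (X ⊕ Unit)) :
    retr k X ((w.map (FreeAlgebra.ι k)).prod)
      ∈ freeGrading k X degX ((w.map (Sum.elim degX fun _ => degy)).sum) := by
  induction w with
  | nil => simpa using one_mem_grading k X degX
  | cons g t ih =>
      rcases g with x | u
      · simp only [List.map_cons, List.prod_cons, map_mul, List.sum_cons]
        have h1 : retr k X (FreeAlgebra.ι k (Sum.inl x)) = FreeAlgebra.ι k x := by
          simp [retr]
        rw [h1]
        exact iota_mul_mem k X degX x _ _ ih
      · simp only [List.map_cons, List.prod_cons, map_mul, List.sum_cons]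
        have h1 : retr k X (FreeAlgebra.ι k (Sum.inr u)) = 0 := by simp [retr]
        rw [h1, zero_mul]
        exact zero_mem _

lemma retr_grading (degX : X → ℤ) (degy : ℤ) (n : ℤ) (b : FreeAlgebra k (X ⊕ Unit))
    (hb : b ∈ freeGrading k (X ⊕ Unit) (Sum.elim degX fun _ => degy) n) :
    retr k X b ∈ freeGrading k X degX n := by
  have hb' : b ∈ Submodule.span k {b | ∃ w : List (X ⊕ Unit),
      (w.map (FreeAlgebra.ι k)).prod = b ∧
      (w.map (Sum.elim degX fun _ => degy)).sum = n} := hb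
  clear hb
  induction hb' using Submodule.span_induction with
  | mem u hu =>
      obtain ⟨w, hw, hs⟩ := hu
      rw [← hw, ← hs]
      exact retr_word k X degX degy w
  | zero => rw [map_zero]; exact zero_mem _
  | add a b _ _ ha hb => rw [map_add]; exact add_mem ha hb
  | smul c a _ ha => rw [map_smul]; exact Submodule.smul_mem _ _ ha

lemma degree_zsmul_le (B : Type) [Ring B] (c : ℤ) (p : Polynomial B) :
    (c • p).degree ≤ p.degree := by
  have : (c • p) = Polynomial.C ((c : B)) * p := by
    rw [zsmul_eq_mul]
    norm_cast
  rw [this]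
  refine le_trans (Polynomial.degree_mul_le _ _) ?_
  calc (Polynomial.C ((c : B))).degree + p.degree ≤ 0 + p.degree :=
        add_le_add Polynomial.degree_C_le le_rfl
    _ = p.degree := by rw [zero_add]

lemma degree_ksmul_le (B : Type) [Ring B] [Algebra k B] (c : k) (p : Polynomial B) :
    (c • p).degree ≤ p.degree := by
  have : (c • p) = Polynomial.C (algebraMap k B c) * p := by
    rw [Algebra.smul_def]
    congr 1
  rw [this]
  refine le_trans (Polynomial.degree_mul_le _ _) ?_
  calc (Polynomial.C (algebraMap k B c)).degree + p.degree ≤ 0 + p.degree :=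
        add_le_add Polynomial.degree_C_le le_rfl
    _ = p.degree := by rw [zero_add]

end MCAux

open MCAux in
/-- Let `A` be a free dg associative algebra and `A⟨y₀⟩` the dg
algebra obtained by freely adjoining one generator `y₀` with `d y₀ ∈ A`.  Then
`MC(A⟨y₀⟩) = MC(A)`: every degree 1 element `ξ` of `A⟨y₀⟩` with `dξ + ξ² = 0`
lies in `A` (and is Maurer–Cartan there). -/
theorem MC_unchanged_by_adding_a_cell
    (k : Type) [Field k] [CharZero k]
    (X : Type) (degX : X → ℤ) (degy : ℤ)
    (incl : FreeAlgebra k X →ₐ[k] FreeAlgebra k (X ⊕ Unit))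
    (hincl : incl = FreeAlgebra.lift k (fun a : X => FreeAlgebra.ι k (Sum.inl a)))
    (y0 : FreeAlgebra k (X ⊕ Unit)) (hy0 : y0 = FreeAlgebra.ι k (Sum.inr ()))
    -- the differential of A: degree 1, graded derivation, square zero
    (dA : FreeAlgebra k X →ₗ[k] FreeAlgebra k X)
    (hdAdeg : ∀ (n : ℤ) (a : FreeAlgebra k X), a ∈ freeGrading k X degX n →
      dA a ∈ freeGrading k X degX (n + 1))
    (hdAder : ∀ (n : ℤ) (a b : FreeAlgebra k X), a ∈ freeGrading k X degX n →
      dA (a * b) = dA a * b + (n.negOnePow : ℤ) • (a * dA b))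
    (hdAsq : ∀ a, dA (dA a) = 0)
    -- the differential of A⟨y₀⟩ extends dA and sends y₀ into A
    (dB : FreeAlgebra k (X ⊕ Unit) →ₗ[k] FreeAlgebra k (X ⊕ Unit))
    (hdBA : ∀ a : FreeAlgebra k X, dB (incl a) = incl (dA a))
    (a0 : FreeAlgebra k X) (hdBy : dB y0 = incl a0)
    (hdBdeg : ∀ (n : ℤ) (b : FreeAlgebra k (X ⊕ Unit)),
      b ∈ freeGrading k (X ⊕ Unit) (Sum.elim degX fun _ => degy) n →
      dB b ∈ freeGrading k (X ⊕ Unit) (Sum.elim degX fun _ => degy) (n + 1))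
    (hdBder : ∀ (n : ℤ) (a b : FreeAlgebra k (X ⊕ Unit)),
      a ∈ freeGrading k (X ⊕ Unit) (Sum.elim degX fun _ => degy) n →
      dB (a * b) = dB a * b + (n.negOnePow : ℤ) • (a * dB b))
    (hdBsq : ∀ b, dB (dB b) = 0) :
    ∀ ξ : FreeAlgebra k (X ⊕ Unit),
      ξ ∈ freeGrading k (X ⊕ Unit) (Sum.elim degX fun _ => degy) 1 →
      dB ξ + ξ * ξ = 0 →
      ∃ a : FreeAlgebra k X,
        a ∈ freeGrading k X degX 1 ∧ dA a + a * a = 0 ∧ incl a = ξ := by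
  intro ξ hξ hMC
  have hincl' : incl = inclA k X := hincl
  clear hincl
  subst hincl' hy0
  set D : X ⊕ Unit → ℤ := Sum.elim degX fun _ => degy with hD
  -- basic facts
  have h1mem : (1 : FreeAlgebra k (X ⊕ Unit)) ∈ freeGrading k (X ⊕ Unit) D 0 :=
    one_mem_grading k (X ⊕ Unit) D
  have hdB1 : dB (1 : FreeAlgebra k (X ⊕ Unit)) = 0 := by
    have h := hdBder 0 1 1 h1mem
    simp only [mul_one, one_mul, Int.negOnePow_zero, Units.val_one, one_smul] at h
    -- h : dB 1 = dB 1 + dB 1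
    have h2 : dB 1 + dB 1 = dB 1 + 0 := by rw [← h, add_zero]
    exact (add_left_cancel h2)
  have hιmem : ∀ g : X ⊕ Unit, FreeAlgebra.ι k g ∈ freeGrading k (X ⊕ Unit) D (D g) :=
    fun g => Submodule.subset_span ⟨[g], by simp, by simp⟩
  have hdBw : ∀ g : X ⊕ Unit, ∃ c : FreeAlgebra k X,
      dB (FreeAlgebra.ι k g) = inclA k X c := by
    rintro (x | ⟨⟩)
    · refine ⟨dA (FreeAlgebra.ι k x), ?_⟩
      have h1 : FreeAlgebra.ι k (Sum.inl x) = inclA k X (FreeAlgebra.ι k x) := by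
        simp [inclA]
      rw [h1, hdBA]
    · exact ⟨a0, hdBy⟩
  have hΦι : ∀ g : X ⊕ Unit, (Phi k X (FreeAlgebra.ι k g)).degree
      ≤ (((if g.isRight then 1 else 0 : ℕ)) : WithBot ℕ) := by
    rintro (x | ⟨⟩)
    · have h1 : Phi k X (FreeAlgebra.ι k (Sum.inl x))
          = Polynomial.C (FreeAlgebra.ι k (Sum.inl x)) := by simp [Phi]
      rw [h1]
      simpa using Polynomial.degree_C_le
    · have h1 : Phi k X (FreeAlgebra.ι k (Sum.inr ()))
          = Polynomial.C (FreeAlgebra.ι k (Sum.inr ())) * Polynomial.X := by simp [Phi]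
      rw [h1]
      refine le_trans (Polynomial.degree_mul_le _ _) ?_
      calc (Polynomial.C (FreeAlgebra.ι k (Sum.inr ()))).degree + Polynomial.X.degree
          ≤ 0 + Polynomial.X.degree := add_le_add Polynomial.degree_C_le le_rfl
        _ ≤ _ := by rw [zero_add, Polynomial.degree_X]; simp
  have hΦw_deg : ∀ w : List (X ⊕ Unit),
      (Phi k X ((w.map (FreeAlgebra.ι k)).prod)).degree
        ≤ ((w.countP (fun g => g.isRight) : ℕ) : WithBot ℕ) := by
    intro w
    rw [Phi_word]
    refine le_trans (Polynomial.degree_mul_le _ _) ?_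
    calc (Polynomial.C ((w.map (FreeAlgebra.ι k)).prod)).degree
            + (Polynomial.X ^ (w.countP (fun g => g.isRight))).degree
        ≤ 0 + (Polynomial.X ^ (w.countP (fun g => g.isRight))).degree :=
          add_le_add Polynomial.degree_C_le le_rfl
      _ ≤ _ := by
          rw [zero_add]
          exact Polynomial.degree_X_pow_le _
  -- L2 : the differential does not increase the y₀-count of a word
  have L2 : ∀ w : List (X ⊕ Unit),
      (Phi k X (dB ((w.map (FreeAlgebra.ι k)).prod))).degree
        ≤ ((w.countP (fun g => g.isRight) : ℕ) : WithBot ℕ) := by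
    intro w
    induction w with
    | nil => simp [hdB1]
    | cons g t ih =>
        have hder := hdBder (D g) (FreeAlgebra.ι k g)
          ((t.map (FreeAlgebra.ι k)).prod) (hιmem g)
        simp only [List.map_cons, List.prod_cons]
        rw [hder, map_add]
        have hcount : ((List.countP (fun g => g.isRight) (g :: t) : ℕ) : WithBot ℕ)
            = ((t.countP (fun g => g.isRight) : ℕ) : WithBot ℕ)
              + (((if g.isRight then 1 else 0 : ℕ)) : WithBot ℕ) := by
          rw [List.countP_cons, Nat.cast_add]
        refine le_trans (Polynomial.degree_add_le _ _) (max_le ?_ ?_)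
        · rw [map_mul]
          obtain ⟨c, hc⟩ := hdBw g
          rw [hc, Phi_inclA]
          refine le_trans (Polynomial.degree_mul_le _ _) ?_
          calc (Polynomial.C (inclA k X c)).degree
                  + (Phi k X ((t.map (FreeAlgebra.ι k)).prod)).degree
              ≤ 0 + ((t.countP (fun g => g.isRight) : ℕ) : WithBot ℕ) :=
                add_le_add Polynomial.degree_C_le (hΦw_deg t)
            _ = ((t.countP (fun g => g.isRight) : ℕ) : WithBot ℕ) := by rw [zero_add]
            _ ≤ _ := by
                rw [hcount]
                exact_mod_cast Nat.le_add_right _ _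
        · rw [map_zsmul]
          refine le_trans (degree_zsmul_le _ _ _) ?_
          rw [map_mul]
          refine le_trans (Polynomial.degree_mul_le _ _) ?_
          rw [hcount, add_comm (((t.countP (fun g => g.isRight) : ℕ)) : WithBot ℕ)]
          exact add_le_add (hΦι g) ih
  -- homogeneous components of ξ and their differentials
  have hπgen : ∀ b : FreeAlgebra k (X ⊕ Unit), b ∈ Submodule.span k
      {b | ∃ w : List (X ⊕ Unit),
        (w.map (FreeAlgebra.ι k)).prod = b ∧ (w.map D).sum = 1} →
      ∀ i : ℕ, (Phi k X (dB ((Phi k X b).coeff i))).degree ≤ (i : WithBot ℕ) := by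
    intro b hb
    induction hb using Submodule.span_induction with
    | mem u hu =>
        obtain ⟨w, hw, -⟩ := hu
        intro i
        rw [← hw, Phi_word, Polynomial.coeff_C_mul, Polynomial.coeff_X_pow]
        by_cases h : i = w.countP (fun g => g.isRight)
        · rw [if_pos h, mul_one, h]
          exact L2 w
        · rw [if_neg h, mul_zero, map_zero, map_zero]
          simp
    | zero => intro i; simp
    | add a b _ _ ha hb =>
        intro i
        rw [map_add, Polynomial.coeff_add, map_add, map_add]
        exact le_trans (Polynomial.degree_add_le _ _) (max_le (ha i) (hb i))
    | smul c a _ ha =>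
        intro i
        rw [map_smul, Polynomial.coeff_smul, map_smul, map_smul]
        exact le_trans (degree_ksmul_le k _ c _) (ha i)
  have hπ : ∀ i : ℕ, (Phi k X (dB ((Phi k X ξ).coeff i))).degree ≤ (i : WithBot ℕ) :=
    hπgen ξ hξ
  -- reconstruction of ξ from the coefficients of Phi ξ
  have hterm : ∀ (i : ℕ) (a : FreeAlgebra k (X ⊕ Unit)),
      ev1 k X (Polynomial.monomial i a) = a := by
    intro i a
    rw [← Polynomial.C_mul_X_pow_eq_monomial, map_mul, map_pow, ev1_C, ev1_X,
      one_pow, mul_one]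
  have hrecon : ξ = ∑ i ∈ (Phi k X ξ).support, (Phi k X ξ).coeff i := by
    conv_lhs => rw [← ev1_Phi k X ξ, Polynomial.as_sum_support (Phi k X ξ)]
    rw [map_sum]
    exact Finset.sum_congr rfl fun i _ => hterm i _
  have L3 : (Phi k X (dB ξ)).degree ≤ (((Phi k X ξ).natDegree : ℕ) : WithBot ℕ) := by
    conv_lhs => rw [hrecon]
    rw [map_sum, map_sum]
    refine le_trans (Polynomial.degree_sum_le _ _) (Finset.sup_le fun i hi => ?_)
    refine le_trans (hπ i) ?_
    exact_mod_cast Polynomial.le_natDegree_of_ne_zero (Polynomial.mem_support_iff.mp hi)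
  -- main argument
  by_cases hz : ξ = 0
  · refine ⟨0, zero_mem _, by simp, by simp [hz]⟩
  have hΦξ : Phi k X ξ ≠ 0 := fun h => hz (by rw [← ev1_Phi k X ξ, h, map_zero])
  have hneg : Phi k X (dB ξ) = -(Phi k X ξ * Phi k X ξ) := by
    have h2 := congrArg (Phi k X) hMC
    rw [map_add, map_mul, map_zero] at h2
    exact eq_neg_of_add_eq_zero_left h2
  have hdeg : (Phi k X ξ).degree + (Phi k X ξ).degree
      ≤ (((Phi k X ξ).natDegree : ℕ) : WithBot ℕ) := by
    rw [← Polynomial.degree_mul]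
    calc (Phi k X ξ * Phi k X ξ).degree = (-(Phi k X ξ * Phi k X ξ)).degree :=
          (Polynomial.degree_neg _).symm
      _ = (Phi k X (dB ξ)).degree := by rw [hneg]
      _ ≤ _ := L3
  have hn0 : (Phi k X ξ).natDegree = 0 := by
    rw [Polynomial.degree_eq_natDegree hΦξ, ← Nat.cast_add, Nat.cast_le] at hdeg
    omega
  have hC : Phi k X ξ = Polynomial.C ((Phi k X ξ).coeff 0) :=
    Polynomial.eq_C_of_natDegree_eq_zero hn0
  have hξ0 : ξ = (Phi k X ξ).coeff 0 := by
    calc ξ = ev1 k X (Phi k X ξ) := (ev1_Phi k X ξ).symm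
      _ = ev1 k X (Polynomial.C ((Phi k X ξ).coeff 0)) := by rw [← hC]
      _ = (Phi k X ξ).coeff 0 := ev1_C k X _
  have hxi : ξ = inclA k X (retr k X ξ) := hξ0.trans (coeff_zero_Phi k X ξ)
  refine ⟨retr k X ξ, retr_grading k X degX degy 1 ξ hξ, ?_, hxi.symm⟩
  have hinj : Function.Injective (inclA k X) := fun u v h => by
    have h2 := congrArg (retr k X) h
    rwa [retr_inclA, retr_inclA] at h2
  apply hinj
  show inclA k X (dA (retr k X ξ) + retr k X ξ * retr k X ξ) = inclA k X 0
  rw [map_add, map_mul, ← hdBA, ← hxi, hMC, map_zero]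


end
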